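/- Let $(Y_n)_{n\ge 1}$ be i.i.d. real random variables and define the autoregressive process $X_n = \sum_{k=1}^p a_k X_{n-k} + Y_n$ for $n \ge 1$ (with $X_n = 0$ for $n \le 0$). If $a_1 \le 0, \dots, a_p \le 0$, then for every $N \ge 1$, $\Pr(\max_{1\le n\le N} X_n \le 0) \le \Pr(Y_1 \le 0)^N$. -/

import Mathlib

open MeasureTheory ProbabilityTheory Finset

theorem stmt_5 {Ω : Type*} [MeasureSpace Ω] [IsProbabilityMeasure (ℙ : Measure Ω)]
    (p : ℕ) (hp : 1 ≤ p) (a : ℕ → ℝ) (ha : ∀ k ∈ Finset.Icc 1 p, a k ≤ 0)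
    (Y : ℕ → Ω → ℝ) (hmeas : ∀ n, Measurable (Y n))
    (hindep : iIndepFun Y ℙ)
    (hident : ∀ n, IdentDistrib (Y n) (Y 1) ℙ ℙ)
    (X : ℕ → Ω → ℝ) (hX0 : ∀ ω, X 0 ω = 0)
    (hXrec : ∀ n, 1 ≤ n → ∀ ω, X n ω = ∑ k ∈ Finset.Icc 1 p, a k * X (n - k) ω + Y n ω) :
    ∀ N, 1 ≤ N →
      ℙ {ω | ∀ n ∈ Finset.Icc 1 N, X n ω ≤ 0} ≤ ℙ {ω | Y 1 ω ≤ 0} ^ N := by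
  intro N hN
  have hsub : {ω | ∀ n ∈ Finset.Icc 1 N, X n ω ≤ 0} ⊆
      ⋂ n ∈ Finset.Icc 1 N, Y n ⁻¹' Set.Iic 0 := by
    intro ω hω
    simp only [Set.mem_iInter]
    intro n hn
    have hn' := Finset.mem_Icc.mp hn
    have hsum : 0 ≤ ∑ k ∈ Finset.Icc 1 p, a k * X (n - k) ω := by
      apply Finset.sum_nonneg
      intro k hk
      have hXle : X (n - k) ω ≤ 0 := by
        rcases Nat.eq_zero_or_pos (n - k) with h | h
        · rw [h, hX0]
        · exact hω _ (Finset.mem_Icc.mpr ⟨h, le_trans (Nat.sub_le n k) hn'.2⟩)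
      exact mul_nonneg_of_nonpos_of_nonpos (ha k hk) hXle
    have hXn := hω n hn
    have hrec := hXrec n hn'.1 ω
    simp only [Set.mem_preimage, Set.mem_Iic]
    linarith
  have hmeasset : ∀ n ∈ Finset.Icc 1 N,
      MeasurableSet[MeasurableSpace.comap (Y n) inferInstance] (Y n ⁻¹' Set.Iic 0) :=
    fun n _ => ⟨Set.Iic 0, measurableSet_Iic, rfl⟩
  calc ℙ {ω | ∀ n ∈ Finset.Icc 1 N, X n ω ≤ 0}
      ≤ ℙ (⋂ n ∈ Finset.Icc 1 N, Y n ⁻¹' Set.Iic 0) := measure_mono hsub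
    _ = ∏ n ∈ Finset.Icc 1 N, ℙ (Y n ⁻¹' Set.Iic 0) := hindep.meas_biInter hmeasset
    _ = ∏ n ∈ Finset.Icc 1 N, ℙ (Y 1 ⁻¹' Set.Iic 0) :=
        Finset.prod_congr rfl fun n _ => (hident n).measure_mem_eq measurableSet_Iic
    _ = ℙ (Y 1 ⁻¹' Set.Iic 0) ^ N := by
        rw [Finset.prod_const, Nat.card_Icc, Nat.add_sub_cancel]
    _ = ℙ {ω | Y 1 ω ≤ 0} ^ N := rfl
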